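/- Let (T,σ) with root ρ be the least resolved tree of a 2-BMG (G,σ). Then each child of ρ is either one of the support leaves S_ρ of ρ, or the root of the least resolved tree of a connected component of the induced subgraph (G − S_ρ, σ|.). -/

import Mathlib

/-- A (finite) rooted tree on vertex type `V`, encoded by its ancestor relation:
`anc u v` means that `u` is an ancestor of `v`, i.e. `u` lies on the path from
the root to `v` (in particular the relation is reflexive, `v ⪯_T u ↔ anc u v`). -/
structure RTree (V : Type) where
  anc : V → V → Prop
  refl : ∀ v, anc v v
  antisymm : ∀ u v, anc u v → anc v u → u = v
  trans : ∀ u v w, anc u v → anc v w → anc u w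
  root : V
  root_anc : ∀ v, anc root v
  chain : ∀ u v w, anc u w → anc v w → anc u v ∨ anc v u

namespace RTree

variable {V C : Type}

/-- a leaf: a vertex without proper descendants. -/
def IsLeaf (T : RTree V) (v : V) : Prop := ∀ w, T.anc v w → w = v

/-- `v` is a child of `u`: `v ≺_T u` with no vertex strictly in between. -/
def IsChild (T : RTree V) (v u : V) : Prop :=
  T.anc u v ∧ u ≠ v ∧ ∀ w, T.anc u w → T.anc w v → w = u ∨ w = v

/-- phylogenetic: every inner vertex has at least two children. -/
def Phylo (T : RTree V) : Prop :=
  ∀ u, ¬ T.IsLeaf u → ∃ v w, v ≠ w ∧ T.IsChild v u ∧ T.IsChild w u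

/-- the leaf set `L(T)`. -/
def leaves (T : RTree V) : Set V := {x | T.IsLeaf x}

/-- `y` is a best match of `x` in the leaf-colored tree `(T,σ)`:
both are leaves, `σ x ≠ σ y`, and for every leaf `y'` of the color `σ y` we have
`lca(x,y) ⪯_T lca(x,y')`, i.e. every common ancestor of `x` and `y'` is an
ancestor of `y`.  These are exactly the arcs of the best match graph `G(T,σ)`,
whose vertex set is the leaf set of `T`. -/
def BestMatch (T : RTree V) (σ : V → C) (x y : V) : Prop :=
  T.IsLeaf x ∧ T.IsLeaf y ∧ σ x ≠ σ y ∧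
    ∀ y', T.IsLeaf y' → σ y' = σ y →
      ∀ u, T.anc u x → T.anc u y' → T.anc u y

/-- the subtree `T(v)` of `T` rooted at `v`. -/
def subtree (T : RTree V) (v : V) : RTree {w : V // T.anc v w} where
  anc a b := T.anc a.1 b.1
  refl a := T.refl a.1
  antisymm a b h1 h2 := Subtype.ext (T.antisymm _ _ h1 h2)
  trans a b c h1 h2 := T.trans _ _ _ h1 h2
  root := ⟨v, T.refl v⟩
  root_anc a := a.2
  chain a b c h1 h2 := T.chain _ _ _ h1 h2

/-- contraction of the tree edge between the non-root vertex `v` and its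
parent: the vertex `v` is identified with its parent, i.e. deleted. -/
def contract (T : RTree V) (v : V) (hv : v ≠ T.root) : RTree {w : V // w ≠ v} where
  anc a b := T.anc a.1 b.1
  refl a := T.refl a.1
  antisymm a b h1 h2 := Subtype.ext (T.antisymm _ _ h1 h2)
  trans a b c h1 h2 := T.trans _ _ _ h1 h2
  root := ⟨T.root, Ne.symm hv⟩
  root_anc a := T.root_anc a.1
  chain a b c h1 h2 := T.chain _ _ _ h1 h2

/-- The edge of `T` between `v` and its parent is redundant with respect to
`G(T,σ)`: contracting it yields a tree that still explains `G(T,σ)`, i.e. the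
contracted tree has the same leaf set and induces the same best-match arcs.
(Edges of a rooted tree are identified with their lower endpoint `v`.) -/
def Redundant (T : RTree V) (σ : V → C) (v : V) : Prop :=
  ∃ hv : v ≠ T.root,
    ¬ T.IsLeaf v ∧
    (∀ w : {w : V // w ≠ v}, T.IsLeaf w.1 ↔ (T.contract v hv).IsLeaf w) ∧
    (∀ x y : {w : V // w ≠ v},
      (T.BestMatch σ x.1 y.1 ↔ (T.contract v hv).BestMatch (fun w => σ w.1) x y))

/-- `(T,σ)` is the least resolved tree (of the BMG `G(T,σ)`): a phylogenetic
tree none of whose edges is redundant. -/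
def LeastResolved (T : RTree V) (σ : V → C) : Prop :=
  T.Phylo ∧ ∀ v, ¬ T.Redundant σ v

/-- the support leaves `S_u = child_T(u) ∩ L(T)` of a vertex `u`. -/
def SupportLeaves (T : RTree V) (u : V) : Set V :=
  {v | T.IsChild v u ∧ T.IsLeaf v}

/-- the set of colors `σ(L(T(v)))` occurring on leaves of the subtree `T(v)`. -/
def subColors (T : RTree V) (σ : V → C) (v : V) : Set C :=
  σ '' {x | T.IsLeaf x ∧ T.anc v x}

/-- the set of colors `σ(L(T))` of the leaves of `T`. -/
def leafColors (T : RTree V) (σ : V → C) : Set C := σ '' T.leaves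

/-- the leaf coloring uses exactly two colors, i.e. `G(T,σ)` is a 2-BMG. -/
def TwoColored (T : RTree V) (σ : V → C) : Prop :=
  ∃ c₁ c₂ : C, c₁ ≠ c₂ ∧ T.leafColors σ = {c₁, c₂}

end RTree

/-- the digraph with arc relation `A`, restricted to the vertex set `S`, is
connected: between any two vertices of `S` there is a path inside `S` in the
underlying undirected graph. -/
def ConnectedOn {β : Type} (A : β → β → Prop) (S : Set β) : Prop :=
  S.Nonempty ∧ ∀ x ∈ S, ∀ y ∈ S,
    Relation.ReflTransGen (fun a b => a ∈ S ∧ b ∈ S ∧ (A a b ∨ A b a)) x y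

/-- `K` is a connected component of the digraph induced by the arc relation `A`
on the vertex set `S`: a maximal connected subset of `S`. -/
def IsComponent {β : Type} (A : β → β → Prop) (S : Set β) (K : Set β) : Prop :=
  K ⊆ S ∧ ConnectedOn A K ∧
    ∀ K', K ⊆ K' → K' ⊆ S → ConnectedOn A K' → K' = K

namespace RTree

/-- the best match graph `G(T,σ)` (on the leaf set of `T`) is connected. -/
def BMGConnected {V C : Type} (T : RTree V) (σ : V → C) : Prop :=
  ConnectedOn (T.BestMatch σ) T.leaves

/-- the umbrella vertices `U(G,σ)` of the BMG `G(T,σ)`: leaves having an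
out-arc to every differently colored leaf. -/
def Umbrella {V C : Type} (T : RTree V) (σ : V → C) : Set V :=
  {x | T.IsLeaf x ∧ ∀ y, T.IsLeaf y → σ y ≠ σ x → T.BestMatch σ x y}

/-- `S` is closed under in-neighbours in `G(T,σ)`: `x ∈ S → N⁻(x) ⊆ S`. -/
def InClosed {V C : Type} (T : RTree V) (σ : V → C) (S : Set V) : Prop :=
  ∀ x ∈ S, ∀ y, T.BestMatch σ y x → y ∈ S

/-- `S` is a support set of `G(T,σ)`: a maximal subset of the umbrella
vertices that is closed under in-neighbours. -/
def IsSupportSet {V C : Type} (T : RTree V) (σ : V → C) (S : Set V) : Prop :=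
  S ⊆ T.Umbrella σ ∧ T.InClosed σ S ∧
    ∀ S', S ⊆ S' → S' ⊆ T.Umbrella σ → T.InClosed σ S' → S' = S

end RTree

section Aux
namespace RTree
variable {V C : Type}

lemma finset_chain_min {α : Type} (r : α → α → Prop) (hrefl : ∀ a, r a a)
    (htrans : ∀ a b c, r a b → r b c → r a c) :
    ∀ s : Finset α, s.Nonempty → (∀ a ∈ s, ∀ b ∈ s, r a b ∨ r b a) →
      ∃ m ∈ s, ∀ w ∈ s, r m w := by
  classical
  intro s
  induction s using Finset.induction_on with
  | empty => intro h; simp at h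
  | @insert a s ha ih =>
    intro _ hch
    by_cases hs : s.Nonempty
    · obtain ⟨m, hm, hmin⟩ := ih hs (fun x hx y hy => hch x (Finset.mem_insert_of_mem hx) y (Finset.mem_insert_of_mem hy))
      rcases hch a (Finset.mem_insert_self a s) m (Finset.mem_insert_of_mem hm) with h | h
      · refine ⟨a, Finset.mem_insert_self a s, fun w hw => ?_⟩
        rcases Finset.mem_insert.mp hw with h' | hw
        · subst h'; exact hrefl w
        · exact htrans _ _ _ h (hmin w hw)
      · refine ⟨m, Finset.mem_insert_of_mem hm, fun w hw => ?_⟩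
        rcases Finset.mem_insert.mp hw with h' | hw
        · subst h'; exact h
        · exact hmin w hw
    · refine ⟨a, Finset.mem_insert_self a s, fun w hw => ?_⟩
      rcases Finset.mem_insert.mp hw with h' | hw
      · subst h'; exact hrefl w
      · exact absurd ⟨w, hw⟩ hs

lemma chain_top [Fintype V] (T : RTree V) {S : Set V} (hne : S.Nonempty)
    (hch : ∀ a ∈ S, ∀ b ∈ S, T.anc a b ∨ T.anc b a) :
    ∃ m ∈ S, ∀ w ∈ S, T.anc m w := by
  classical
  obtain ⟨m, hm, h⟩ := finset_chain_min T.anc T.refl T.trans S.toFinset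
    (by simpa [Set.toFinset_nonempty] using hne)
    (by intro a ha b hb; exact hch a (Set.mem_toFinset.mp ha) b (Set.mem_toFinset.mp hb))
  exact ⟨m, Set.mem_toFinset.mp hm, fun w hw => h w (Set.mem_toFinset.mpr hw)⟩

lemma chain_bot [Fintype V] (T : RTree V) {S : Set V} (hne : S.Nonempty)
    (hch : ∀ a ∈ S, ∀ b ∈ S, T.anc a b ∨ T.anc b a) :
    ∃ m ∈ S, ∀ w ∈ S, T.anc w m := by
  classical
  obtain ⟨m, hm, h⟩ := finset_chain_min (fun a b => T.anc b a) T.refl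
    (fun a b c h1 h2 => T.trans _ _ _ h2 h1) S.toFinset
    (by simpa [Set.toFinset_nonempty] using hne)
    (by intro a ha b hb; exact (hch a (Set.mem_toFinset.mp ha) b (Set.mem_toFinset.mp hb)).symm)
  exact ⟨m, Set.mem_toFinset.mp hm, fun w hw => h w (Set.mem_toFinset.mpr hw)⟩

lemma exists_child_on_path [Fintype V] (T : RTree V) {a b : V} (h : T.anc a b) (hne : a ≠ b) :
    ∃ c, T.IsChild c a ∧ T.anc c b := by
  set S : Set V := {w | T.anc a w ∧ T.anc w b ∧ w ≠ a} with hS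
  have hbS : b ∈ S := ⟨h, T.refl b, Ne.symm hne⟩
  obtain ⟨m, hm, hmax⟩ := chain_top T ⟨b, hbS⟩
    (fun x hx y hy => T.chain x y b hx.2.1 hy.2.1)
  refine ⟨m, ⟨hm.1, Ne.symm hm.2.2, ?_⟩, hm.2.1⟩
  intro w hw1 hw2
  by_cases hwa : w = a
  · exact Or.inl hwa
  · exact Or.inr (T.antisymm m w (hmax w ⟨hw1, T.trans _ _ _ hw2 hm.2.1, hwa⟩) hw2).symm

lemma exists_leaf_below [Fintype V] (T : RTree V) (a : V) :
    ∃ x, T.anc a x ∧ T.IsLeaf x := by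
  classical
  have key : ∀ n a, ({u | T.anc a u} : Set V).toFinset.card ≤ n →
      ∃ x, T.anc a x ∧ T.IsLeaf x := by
    intro n
    induction n with
    | zero =>
      intro a hcard
      exfalso
      have : a ∈ ({u | T.anc a u} : Set V).toFinset := Set.mem_toFinset.mpr (T.refl a)
      have := Finset.card_pos.mpr ⟨a, this⟩
      omega
    | succ n ih =>
      intro a hcard
      by_cases hl : T.IsLeaf a
      · exact ⟨a, T.refl a, hl⟩
      · obtain ⟨w, hw, hwa⟩ : ∃ w, T.anc a w ∧ w ≠ a := by
          by_contra hc
          push_neg at hc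
          exact hl (fun w h => hc w h)
        have hsub : ({u | T.anc w u} : Set V).toFinset ⊂ ({u | T.anc a u} : Set V).toFinset := by
          refine Finset.ssubset_iff_of_subset ?_ |>.mpr ⟨a, Set.mem_toFinset.mpr (T.refl a), ?_⟩
          · intro u hu
            exact Set.mem_toFinset.mpr (T.trans _ _ _ hw (Set.mem_toFinset.mp hu))
          · intro hmem
            exact hwa (T.antisymm w a (Set.mem_toFinset.mp hmem) hw)
        obtain ⟨x, hx1, hx2⟩ := ih w (by have := Finset.card_lt_card hsub; omega)
        exact ⟨x, T.trans _ _ _ hw hx1, hx2⟩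
  exact key _ a le_rfl

end RTree
end Aux
section Aux2
namespace RTree
variable {V C : Type}

lemma subtree_isLeaf_iff (T : RTree V) {v : V} (w : {w : V // T.anc v w}) :
    (T.subtree v).IsLeaf w ↔ T.IsLeaf w.1 := by
  constructor
  · intro h z hz
    exact congrArg Subtype.val (h ⟨z, T.trans _ _ _ w.2 hz⟩ hz)
  · intro h z hz
    exact Subtype.ext (h z.1 hz)

lemma contract_isLeaf_iff (T : RTree V) {v : V} (hv : v ≠ T.root) (hvl : ¬ T.IsLeaf v)
    (w : {w : V // w ≠ v}) : T.IsLeaf w.1 ↔ (T.contract v hv).IsLeaf w := by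
  constructor
  · intro h z hz
    exact Subtype.ext (h z.1 hz)
  · intro h z hz
    by_cases hzv : z = v
    · exfalso
      subst hzv
      obtain ⟨u, hu, huz⟩ : ∃ u, T.anc z u ∧ u ≠ z := by
        by_contra hc
        push_neg at hc
        exact hvl (fun u h' => hc u h')
      have h1 : T.anc w.1 u := T.trans _ _ _ hz hu
      have h2 : (⟨u, huz⟩ : {w : V // w ≠ z}) = w := h ⟨u, huz⟩ h1
      have : u = w.1 := congrArg Subtype.val h2
      subst this
      exact w.2 (T.antisymm _ _ hz hu)
    · exact congrArg Subtype.val (h ⟨z, hzv⟩ hz)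

lemma bm_contract_of_bm (T : RTree V) (σ : V → C) {v : V} (hv : v ≠ T.root)
    (hvl : ¬ T.IsLeaf v) (x y : {w : V // w ≠ v}) (h : T.BestMatch σ x.1 y.1) :
    (T.contract v hv).BestMatch (fun w => σ w.1) x y := by
  obtain ⟨hx, hy, hne, hall⟩ := h
  exact ⟨(T.contract_isLeaf_iff hv hvl x).mp hx, (T.contract_isLeaf_iff hv hvl y).mp hy, hne,
    fun y' hy' hc u hux huy' =>
      hall y'.1 ((T.contract_isLeaf_iff hv hvl y').mpr hy') hc u.1 hux huy'⟩

lemma redundant_of_local (T : RTree V) (σ : V → C) {v : V} (hv : v ≠ T.root)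
    (hvl : ¬ T.IsLeaf v)
    (H : ∀ x y : V, x ≠ v → y ≠ v → T.IsLeaf x → T.IsLeaf y → σ x ≠ σ y →
      (∀ y₂, T.IsLeaf y₂ → σ y₂ = σ y → ∀ w, w ≠ v → T.anc w x → T.anc w y₂ → T.anc w y) →
      ∀ y', T.IsLeaf y' → σ y' = σ y → T.anc v x → T.anc v y' → T.anc v y) :
    T.Redundant σ v := by
  refine ⟨hv, hvl, fun w => (T.contract_isLeaf_iff hv hvl w), fun x y => ?_⟩
  constructor
  · exact T.bm_contract_of_bm σ hv hvl x y
  · rintro ⟨hx, hy, hne, hall⟩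
    have hx' : T.IsLeaf x.1 := (T.contract_isLeaf_iff hv hvl x).mpr hx
    have hy' : T.IsLeaf y.1 := (T.contract_isLeaf_iff hv hvl y).mpr hy
    have hCB : ∀ y₂, T.IsLeaf y₂ → σ y₂ = σ y.1 → ∀ w, w ≠ v → T.anc w x.1 → T.anc w y₂ →
        T.anc w y.1 := by
      intro y₂ hy₂ hc w hwv hwx hwy₂
      have hy₂v : y₂ ≠ v := fun h => hvl (h ▸ hy₂)
      exact hall ⟨y₂, hy₂v⟩ ((T.contract_isLeaf_iff hv hvl ⟨y₂, hy₂v⟩).mp hy₂) hc ⟨w, hwv⟩ hwx hwy₂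
    refine ⟨hx', hy', hne, ?_⟩
    intro y' hy'' hc u hux huy'
    by_cases huv : u = v
    · subst huv
      exact H x.1 y.1 x.2 y.2 hx' hy' hne hCB y' hy'' hc hux huy'
    · exact hCB y' hy'' hc u huv hux huy'

lemma exists_witness (T : RTree V) (σ : V → C) {v : V} (hv : v ≠ T.root)
    (hvl : ¬ T.IsLeaf v) (hnr : ¬ T.Redundant σ v) :
    ∃ x y y' : V, T.IsLeaf x ∧ T.IsLeaf y ∧ T.IsLeaf y' ∧ σ y' = σ y ∧ σ x ≠ σ y ∧
      T.anc v x ∧ T.anc v y' ∧ ¬ T.anc v y ∧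
      (∀ y₂, T.IsLeaf y₂ → σ y₂ = σ y → ∀ w, w ≠ v → T.anc w x → T.anc w y₂ → T.anc w y) := by
  by_contra hc
  push_neg at hc
  apply hnr
  apply T.redundant_of_local σ hv hvl
  intro x y hxv hyv hx hy hne hCB y' hy' hcol hvx hvy'
  by_contra hvy
  obtain ⟨y₂, hy₂, hc2, w, hwv, hwx, hwy₂, hwy⟩ := hc x y y' hx hy hy' hcol hne hvx hvy' hvy
  exact hwy (hCB y₂ hy₂ hc2 w hwv hwx hwy₂)

end RTree
end Aux2
section Aux3
namespace RTree
variable {V C : Type}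

lemma subtree_bm_iff (T : RTree V) (σ : V → C) {v : V} (a b : {w : V // T.anc v w}) :
    (T.subtree v).BestMatch (fun w => σ w.1) a b ↔ T.BestMatch σ a.1 b.1 := by
  constructor
  · rintro ⟨hx, hy, hne, hall⟩
    refine ⟨(T.subtree_isLeaf_iff a).mp hx, (T.subtree_isLeaf_iff b).mp hy, hne, ?_⟩
    intro y' hy' hc u hua huy'
    by_cases hvy' : T.anc v y'
    · by_cases hvu : T.anc v u
      · exact hall ⟨y', hvy'⟩ ((T.subtree_isLeaf_iff ⟨y', hvy'⟩).mpr hy') hc ⟨u, hvu⟩ hua huy'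
      · rcases T.chain u v a.1 hua a.2 with h | h
        · exact T.trans _ _ _ h b.2
        · exact absurd h hvu
    · rcases T.chain u v a.1 hua a.2 with h | h
      · exact T.trans _ _ _ h b.2
      · exact absurd (T.trans _ _ _ h huy') hvy'
  · rintro ⟨hx, hy, hne, hall⟩
    refine ⟨(T.subtree_isLeaf_iff a).mpr hx, (T.subtree_isLeaf_iff b).mpr hy, hne, ?_⟩
    intro y' hy' hc u hua huy'
    exact hall y'.1 ((T.subtree_isLeaf_iff y').mp hy') hc u.1 hua huy'

lemma subtree_isChild_iff (T : RTree V) {v : V} (a u : {w : V // T.anc v w}) :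
    (T.subtree v).IsChild a u ↔ T.IsChild a.1 u.1 := by
  constructor
  · rintro ⟨h1, h2, h3⟩
    refine ⟨h1, fun h => h2 (Subtype.ext h), ?_⟩
    intro w hw1 hw2
    have hvw : T.anc v w := T.trans _ _ _ u.2 hw1
    rcases h3 ⟨w, hvw⟩ hw1 hw2 with h | h
    · exact Or.inl (congrArg Subtype.val h)
    · exact Or.inr (congrArg Subtype.val h)
  · rintro ⟨h1, h2, h3⟩
    refine ⟨h1, fun h => h2 (congrArg Subtype.val h), ?_⟩
    intro w hw1 hw2
    rcases h3 w.1 hw1 hw2 with h | h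
    · exact Or.inl (Subtype.ext h)
    · exact Or.inr (Subtype.ext h)

lemma two_color_cases (T : RTree V) (σ : V → C) {c₁ c₂ : C}
    (hcol : T.leafColors σ = {c₁, c₂}) {a b z : V}
    (ha : T.IsLeaf a) (hb : T.IsLeaf b) (hz : T.IsLeaf z) (hne : σ a ≠ σ b) :
    σ z = σ a ∨ σ z = σ b := by
  have mem : ∀ w, T.IsLeaf w → σ w = c₁ ∨ σ w = c₂ := by
    intro w hw
    have : σ w ∈ T.leafColors σ := ⟨w, hw, rfl⟩
    rw [hcol] at this
    simpa using this
  rcases mem a ha with h1 | h1 <;> rcases mem b hb with h2 | h2 <;>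
    rcases mem z hz with h3 | h3 <;> simp_all <;> tauto

lemma child_root_eq (T : RTree V) {a b : V} (ha : T.IsChild a T.root)
    (hb : T.IsChild b T.root) (h : T.anc a b) : a = b := by
  rcases hb.2.2 a (T.root_anc a) h with h' | h'
  · exact absurd h'.symm ha.2.1
  · exact h'

lemma child_root_eq_of_common (T : RTree V) {a b w : V} (ha : T.IsChild a T.root)
    (hb : T.IsChild b T.root) (h1 : T.anc a w) (h2 : T.anc b w) : a = b := by
  rcases T.chain a b w h1 h2 with h | h
  · exact T.child_root_eq ha hb h
  · exact (T.child_root_eq hb ha h).symm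

end RTree
end Aux3
section Aux4
namespace RTree
variable {V C : Type}

lemma subtree_leastResolved (T : RTree V) (σ : V → C) (hLRT : T.LeastResolved σ)
    {v : V} (hv : v ≠ T.root) :
    (T.subtree v).LeastResolved (fun w => σ w.1) := by
  constructor
  · -- Phylo
    intro u hu
    have hTu : ¬ T.IsLeaf u.1 := fun h => hu ((T.subtree_isLeaf_iff u).mpr h)
    obtain ⟨a, b, hab, hca, hcb⟩ := hLRT.1 u.1 hTu
    have hva : T.anc v a := T.trans _ _ _ u.2 hca.1
    have hvb : T.anc v b := T.trans _ _ _ u.2 hcb.1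
    exact ⟨⟨a, hva⟩, ⟨b, hvb⟩, fun h => hab (congrArg Subtype.val h),
      (T.subtree_isChild_iff ⟨a, hva⟩ u).mpr hca, (T.subtree_isChild_iff ⟨b, hvb⟩ u).mpr hcb⟩
  · -- no redundant edges
    intro u hred
    obtain ⟨hu, hul, _hliff, hbmiff⟩ := hred
    have huv : u.1 ≠ v := by
      intro h
      exact hu (Subtype.ext h)
    have hTul : ¬ T.IsLeaf u.1 := fun h => hul ((T.subtree_isLeaf_iff u).mpr h)
    have huroot : u.1 ≠ T.root := by
      intro h
      exact hv (T.antisymm v T.root (h ▸ u.2) (T.root_anc v))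
    apply hLRT.2 u.1
    apply T.redundant_of_local σ huroot hTul
    intro x y hxu hyu hx hy hne hCB y' hy' hc hux huy'
    have hvx : T.anc v x := T.trans _ _ _ u.2 hux
    have hvy' : T.anc v y' := T.trans _ _ _ u.2 huy'
    by_cases hvy : T.anc v y
    · -- transfer to the subtree
      set x' : {w : V // T.anc v w} := ⟨x, hvx⟩ with hx'def
      set y'' : {w : V // T.anc v w} := ⟨y, hvy⟩ with hy''def
      have nex : x' ≠ u := fun h => hxu (congrArg Subtype.val h)
      have ney : y'' ≠ u := fun h => hyu (congrArg Subtype.val h)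
      have cBM : ((T.subtree v).contract u hu).BestMatch (fun w => σ w.1.1) ⟨x', nex⟩ ⟨y'', ney⟩ := by
        refine ⟨?_, ?_, hne, ?_⟩
        · exact (contract_isLeaf_iff (T.subtree v) hu hul ⟨x', nex⟩).mp
            ((T.subtree_isLeaf_iff x').mpr hx)
        · exact (contract_isLeaf_iff (T.subtree v) hu hul ⟨y'', ney⟩).mp
            ((T.subtree_isLeaf_iff y'').mpr hy)
        · intro y₃ hy₃ hc3 w hwx hwy₃
          have hy₃T : T.IsLeaf y₃.1.1 :=
            (T.subtree_isLeaf_iff y₃.1).mp ((contract_isLeaf_iff (T.subtree v) hu hul y₃).mpr hy₃)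
          have wne : w.1.1 ≠ u.1 := fun h => w.2 (Subtype.ext h)
          exact hCB y₃.1.1 hy₃T hc3 w.1.1 wne hwx hwy₃
      have sbm : (T.subtree v).BestMatch (fun w => σ w.1) x' y'' :=
        (hbmiff ⟨x', nex⟩ ⟨y'', ney⟩).mpr cBM
      have tbm : T.BestMatch σ x y := (T.subtree_bm_iff σ x' y'').mp sbm
      exact tbm.2.2.2 y' hy' hc u.1 hux huy'
    · exact absurd (hCB y' hy' hc v (Ne.symm huv) hvx hvy') hvy

end RTree
end Aux4
/-- Let `(T,σ)` with root `ρ` be the LRT of a 2-BMG `(G,σ)`.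
Each child of `ρ` is either one of the support leaves `S_ρ`, or the root of the
least resolved tree for a connected component of `(G − S_ρ, σ|.)`: i.e. the
subtree `T(v)` is least resolved, its leaf set is a connected component of
`G − S_ρ` and its best-match arcs agree with those of `G`. -/
theorem child_of_root_dichotomy {V C : Type} [Fintype V]
    (T : RTree V) (σ : V → C) (hLRT : T.LeastResolved σ)
    (h2 : T.TwoColored σ) :
    ∀ v, T.IsChild v T.root →
      v ∈ T.SupportLeaves T.root ∨
        (IsComponent (T.BestMatch σ) (T.leaves \ T.SupportLeaves T.root)
            {x | T.IsLeaf x ∧ T.anc v x} ∧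
          (T.subtree v).LeastResolved (fun w => σ w.1) ∧
          ∀ a b : {w : V // T.anc v w},
            ((T.subtree v).BestMatch (fun w => σ w.1) a b ↔
              T.BestMatch σ a.1 b.1)) := by
  obtain ⟨hphylo, hnr⟩ := hLRT
  obtain ⟨c₁, c₂, hc12, hcol⟩ := h2
  intro v hvchild
  by_cases hleaf : T.IsLeaf v
  · exact Or.inl ⟨hvchild, hleaf⟩
  right
  have hvroot : v ≠ T.root := Ne.symm hvchild.2.1
  obtain ⟨x, y, y', hx, hy, hy', hyy', hxy, hvx, hvy', hvy, hCB⟩ :=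
    T.exists_witness σ hvroot hleaf (hnr v)
  have hxv : x ≠ v := fun h => hleaf (h ▸ hx)
  obtain ⟨u₀, hu₀child, hu₀x⟩ := T.exists_child_on_path hvx (Ne.symm hxv)
  have hu₀v : u₀ ≠ v := Ne.symm hu₀child.2.1
  have mono₀ : ∀ z, T.IsLeaf z → T.anc u₀ z → σ z ≠ σ y := by
    intro z hz ha hcz
    exact hvy (T.trans v u₀ y hu₀child.1 (hCB z hz hcz u₀ hu₀v hu₀x ha))
  set Lv : Set V := {x | T.IsLeaf x ∧ T.anc v x} with hLvdef
  have hxLv : x ∈ Lv := ⟨hx, hvx⟩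
  have hy'Lv : y' ∈ Lv := ⟨hy', hvy'⟩
  have A1 : ∀ z ∈ Lv, σ z = σ y → T.BestMatch σ x z := by
    intro z hz hcz
    refine ⟨hx, hz.1, by rw [hcz]; exact hxy, ?_⟩
    intro y₂ hy₂ hc2 w hwx hwy₂
    by_cases hw0 : T.anc u₀ w
    · exact absurd (hc2.trans hcz) (mono₀ y₂ hy₂ (T.trans _ _ _ hw0 hwy₂))
    · rcases T.chain u₀ w x hu₀x hwx with h | h
      · exact absurd h hw0
      · rcases T.chain w v x hwx hvx with h2 | h2
        · exact T.trans _ _ _ h2 hz.2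
        · rcases hu₀child.2.2 w h2 h with h3 | h3
          · rw [h3]; exact hz.2
          · exact absurd (by rw [h3]; exact T.refl u₀) hw0
  have A2 : ∀ z ∈ Lv, σ z ≠ σ y → ∃ z', z' ∈ Lv ∧ σ z' = σ y ∧ T.BestMatch σ z z' := by
    intro z hz hcz
    set A : Set V := {w | T.anc w z ∧ ∃ y₂, T.IsLeaf y₂ ∧ σ y₂ = σ y ∧ T.anc v y₂ ∧ T.anc w y₂}
      with hAdef
    have hvA : v ∈ A := ⟨hz.2, y', hy', hyy', hvy', hvy'⟩
    obtain ⟨m, hmA, hmin⟩ := T.chain_bot ⟨v, hvA⟩ (fun a ha b hb => T.chain a b z ha.1 hb.1)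
    obtain ⟨hmz, z', hz', hcz', hvz', hmz'⟩ := hmA
    refine ⟨z', ⟨hz', hvz'⟩, hcz', hz.1, hz', by rw [hcz']; exact hcz, ?_⟩
    intro y₂ hy₂ hc2 w hwz hwy₂
    by_cases hvy₂ : T.anc v y₂
    · exact T.trans _ _ _ (hmin w ⟨hwz, y₂, hy₂, hc2.trans hcz', hvy₂, hwy₂⟩) hmz'
    · rcases T.chain w v z hwz hz.2 with h | h
      · exact T.trans _ _ _ h hvz'
      · exact absurd (T.trans _ _ _ h hwy₂) hvy₂
  have hstep : ∀ p ∈ Lv,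
      Relation.ReflTransGen
        (fun a b => a ∈ Lv ∧ b ∈ Lv ∧ (T.BestMatch σ a b ∨ T.BestMatch σ b a)) p x := by
    intro p hp
    rcases T.two_color_cases σ hcol hx hy hp.1 hxy with h | h
    · have hpy : σ p ≠ σ y := by rw [h]; exact hxy
      obtain ⟨z', hz'Lv, hcz', hbm⟩ := A2 p hp hpy
      exact Relation.ReflTransGen.head ⟨hp, hz'Lv, Or.inl hbm⟩
        (Relation.ReflTransGen.single ⟨hz'Lv, hxLv, Or.inr (A1 z' hz'Lv hcz')⟩)
    · exact Relation.ReflTransGen.single ⟨hp, hxLv, Or.inr (A1 p hp h)⟩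
  have hsym : Symmetric
      (fun a b => a ∈ Lv ∧ b ∈ Lv ∧ (T.BestMatch σ a b ∨ T.BestMatch σ b a)) :=
    fun a b ⟨h1, h2, h3⟩ => ⟨h2, h1, h3.symm⟩
  have hconnLv : ConnectedOn (T.BestMatch σ) Lv := by
    refine ⟨⟨x, hxLv⟩, ?_⟩
    intro p hp q hq
    exact (hstep p hp).trans ((@Std.Symm.symm _ _ (@Relation.ReflTransGen.stdSymm _ _ ⟨fun _ _ h => hsym h⟩)) _ _ (hstep q hq))
  have hsubset : Lv ⊆ T.leaves \ T.SupportLeaves T.root := by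
    rintro z ⟨hzl, hvz⟩
    refine ⟨hzl, ?_⟩
    rintro ⟨hzc, -⟩
    rcases hzc.2.2 v (T.root_anc v) hvz with h | h
    · exact hvroot h
    · exact hleaf (by rw [h]; exact hzl)
  have cross : ∀ a c, a ∈ T.leaves \ T.SupportLeaves T.root →
      (T.BestMatch σ a c ∨ T.BestMatch σ c a) → c ∈ Lv → a ∈ Lv := by
    intro a c haS harc hc
    rcases harc with hbm | hbm
    · by_contra haLv
      have hal : T.IsLeaf a := hbm.1
      have hva : ¬ T.anc v a := fun h => haLv ⟨hal, h⟩
      have haroot : a ≠ T.root := by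
        intro h
        apply hvroot
        have hva' : v = a := hal v (by rw [h]; exact T.root_anc v)
        rw [hva', h]
      obtain ⟨u', hu'child, hu'a⟩ := T.exists_child_on_path (T.root_anc a) (Ne.symm haroot)
      have hu'v : u' ≠ v := by
        intro h
        exact hva (by rw [← h]; exact hu'a)
      have hu'leaf : ¬ T.IsLeaf u' := by
        intro h
        have hau : a = u' := h a hu'a
        exact haS.2 (by rw [hau]; exact ⟨hu'child, h⟩)
      obtain ⟨x₁, y₁, y₁', hx₁, hy₁, hy₁', hc₁, hne₁, hux₁, huy₁', -, -⟩ :=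
        T.exists_witness σ (Ne.symm hu'child.2.1) hu'leaf (hnr u')
      have hne₁' : σ x₁ ≠ σ y₁' := by rw [hc₁]; exact hne₁
      obtain ⟨y₃, hy₃, hcy₃, huy₃⟩ : ∃ y₃, T.IsLeaf y₃ ∧ σ y₃ = σ c ∧ T.anc u' y₃ := by
        rcases T.two_color_cases σ hcol hx₁ hy₁' hbm.2.1 hne₁' with h | h
        · exact ⟨x₁, hx₁, h.symm, hux₁⟩
        · exact ⟨y₁', hy₁', h.symm, huy₁'⟩
      have huc : T.anc u' c := hbm.2.2.2 y₃ hy₃ hcy₃ u' hu'a huy₃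
      exact hu'v (T.child_root_eq_of_common hu'child hvchild huc hc.2)
    · obtain ⟨y₃, hy₃Lv, hcy₃⟩ : ∃ y₃, y₃ ∈ Lv ∧ σ y₃ = σ a := by
        rcases T.two_color_cases σ hcol hx hy hbm.2.1 hxy with h | h
        · exact ⟨x, hxLv, h.symm⟩
        · exact ⟨y', hy'Lv, hyy'.trans h.symm⟩
      exact ⟨hbm.2.1, hbm.2.2.2 y₃ hy₃Lv.1 hcy₃ v hc.2 hy₃Lv.2⟩
  have hmax : ∀ K', Lv ⊆ K' → K' ⊆ T.leaves \ T.SupportLeaves T.root →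
      ConnectedOn (T.BestMatch σ) K' → K' = Lv := by
    intro K' hsub hsub' hconn
    refine Set.Subset.antisymm ?_ hsub
    intro z hz
    have hpath := hconn.2 z hz x (hsub hxLv)
    have claim : ∀ a b : V,
        Relation.ReflTransGen
          (fun a b => a ∈ K' ∧ b ∈ K' ∧ (T.BestMatch σ a b ∨ T.BestMatch σ b a)) a b →
        b ∈ Lv → a ∈ Lv := by
      intro a b h
      induction h using Relation.ReflTransGen.head_induction_on with
      | refl => exact id
      | head step path ih =>
        intro hb
        exact cross _ _ (hsub' step.1) step.2.2 (ih hb)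
    exact claim z x hpath hxLv
  exact ⟨⟨hsubset, hconnLv, hmax⟩, T.subtree_leastResolved σ ⟨hphylo, hnr⟩ hvroot,
    fun a b => T.subtree_bm_iff σ a b⟩
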